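/- Let n, k, y be integers with 1 ≤ k ≤ n, y even, 2 ≤ y < k, and (log 2)/2 ≤ yk/n < 1 (log denoting natural logarithm). Then the probability that a lazy step selects between 1 and y/2 (inclusive) of the y mismatched coordinates is at least (√2 − 1)/(4·√2); that is, ∑_{i : 1 ≤ i ≤ y/2} binom(y,i)·binom(n−y, k−i) / (2·binom(n,k)) ≥ (√2 − 1)/(4·√2). -/

import Mathlib

open Finset

/-- `pcoup n k y i` is the probability that a lazy step of the coupling is active and selects
exactly `i` of the `y` mismatched coordinates among the `k` coordinates picked:
`binom(y,i)·binom(n−y,k−i) / (2·binom(n,k))`. -/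
noncomputable def pcoup (n k y : ℕ) (i : ℕ) : ℝ :=
  ((y.choose i * (n - y).choose (k - i) : ℕ) : ℝ) / (2 * n.choose k)

lemma pcoup_dec (n k y : ℕ) (hy2 : 2 ≤ y) (hyk : y < k) (hn : y * k < n) :
    ∀ i, 1 ≤ i → i + 1 ≤ k →
      y.choose (i + 1) * (n - y).choose (k - (i + 1)) ≤ y.choose i * (n - y).choose (k - i) := by
  intro i hi hik
  have hykn : y + k + 1 ≤ n := by nlinarith
  by_cases hiy : i ≤ y
  · set m := n - y with hm
    have hmk : k + 1 ≤ m := by omega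
    have A := Nat.choose_succ_right_eq y i
    have B := Nat.choose_succ_right_eq m (k - i - 1)
    have hki : k - i - 1 + 1 = k - i := by omega
    rw [hki] at B
    have hks : k - (i + 1) = k - i - 1 := by omega
    rw [hks]
    have hc : (y - i) * (k - i) ≤ (i + 1) * (m - (k - i - 1)) := by
      have h1 : i ≤ k := by omega
      have h2 : k - i - 1 ≤ m := by omega
      have c1 : ((y - i : ℕ) : ℤ) = (y:ℤ) - i := by omega
      have c2 : ((k - i : ℕ) : ℤ) = (k:ℤ) - i := by omega
      have c3 : ((m - (k - i - 1) : ℕ) : ℤ) = (n:ℤ) - y - k + i + 1 := by omega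
      zify
      rw [c1, c2, c3]
      nlinarith [mul_nonneg (by omega : (0:ℤ) ≤ (y:ℤ) - i) (by omega : (0:ℤ) ≤ (i:ℤ) - 1),
        mul_nonneg (by omega : (0:ℤ) ≤ (k:ℤ) - i) (by omega : (0:ℤ) ≤ (i:ℤ) - 1),
        mul_nonneg (by omega : (0:ℤ) ≤ (i:ℤ) - 1) (by omega : (0:ℤ) ≤ (k:ℤ) - 1)]
    have hmul : (y.choose (i + 1) * m.choose (k - i - 1)) * ((i + 1) * (m - (k - i - 1)))
        = (y.choose i * m.choose (k - i)) * ((y - i) * (k - i)) := by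
      calc (y.choose (i + 1) * m.choose (k - i - 1)) * ((i + 1) * (m - (k - i - 1)))
          = (y.choose (i + 1) * (i + 1)) * (m.choose (k - i - 1) * (m - (k - i - 1))) := by ring
        _ = (y.choose i * (y - i)) * (m.choose (k - i) * (k - i)) := by rw [A, ← B]
        _ = (y.choose i * m.choose (k - i)) * ((y - i) * (k - i)) := by ring
    have hD : 0 < (i + 1) * (m - (k - i - 1)) := by
      have : 0 < m - (k - i - 1) := by omega
      positivity
    have : (y.choose (i + 1) * m.choose (k - i - 1)) * ((i + 1) * (m - (k - i - 1)))
        ≤ (y.choose i * m.choose (k - i)) * ((i + 1) * (m - (k - i - 1))) := by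
      rw [hmul]
      exact Nat.mul_le_mul_left _ hc
    exact Nat.le_of_mul_le_mul_right this hD
  · rw [Nat.choose_eq_zero_of_lt (by omega : y < i + 1)]
    simp

lemma descFactorial_ratio (n y : ℕ) : ∀ j, j ≤ n - y →
    (n - y).descFactorial j * n ^ j ≤ n.descFactorial j * (n - y) ^ j := by
  intro j
  induction j with
  | zero => simp
  | succ j ih =>
    intro hj
    have hj' : j ≤ n - y := by omega
    rw [Nat.descFactorial_succ, Nat.descFactorial_succ, pow_succ, pow_succ]
    have h1 : (n - y - j) * n ≤ (n - j) * (n - y) := by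
      have hyn : y ≤ n := by omega
      have hjn : j ≤ n := by omega
      zify [hj', hyn, hjn]
      nlinarith [Nat.zero_le (y * j)]
    calc (n - y - j) * (n - y).descFactorial j * ((n) ^ j * n)
        = ((n - y - j) * n) * ((n - y).descFactorial j * n ^ j) := by ring
      _ ≤ ((n - j) * (n - y)) * (n.descFactorial j * (n - y) ^ j) :=
          Nat.mul_le_mul h1 (ih hj')
      _ = (n - j) * n.descFactorial j * ((n - y) ^ j * (n - y)) := by ring

/-- Lemma `lemma general`, part 8: if `y < k` and `(log 2)/2 ≤ yk/n < 1`, the probability of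
selecting between `1` and `y/2` mismatched coordinates is at least `(√2−1)/(4√2)`. -/
theorem stmt_12 (n k y : ℕ) (hk1 : 1 ≤ k) (hkn : k ≤ n) (hye : Even y) (hy2 : 2 ≤ y)
    (hyk : y < k) (h1 : Real.log 2 / 2 ≤ (y : ℝ) * k / n) (h2 : (y : ℝ) * k / n < 1) :
    (Real.sqrt 2 - 1) / (4 * Real.sqrt 2) ≤ ∑ i ∈ Finset.Icc 1 (y / 2), pcoup n k y i := by
  have hn0 : 0 < n := lt_of_lt_of_le hk1 hkn
  have hykn : y * k < n := by
    have := (div_lt_one (by positivity : (0:ℝ) < (n:ℝ))).mp h2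
    exact_mod_cast this
  have hyn1 : y + k + 1 ≤ n := by nlinarith
  obtain ⟨h, hh⟩ : ∃ h, y = 2 * h := by obtain ⟨r, hr⟩ := hye; exact ⟨r, by omega⟩
  have hh1 : 1 ≤ h := by omega
  have hhy : y / 2 = h := by omega
  set g : ℕ → ℕ := fun i => y.choose i * (n - y).choose (k - i) with hg
  -- monotonicity chain
  have hchain : ∀ j i, 1 ≤ i → i ≤ j → j ≤ y → g j ≤ g i := by
    intro j
    induction j with
    | zero => intro i h1 h2 _; omega
    | succ j ih =>
      intro i hi hij hjk
      rcases Nat.lt_or_ge i (j + 1) with hlt | hge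
      · have hij' : i ≤ j := by omega
        have : g (j + 1) ≤ g j :=
          pcoup_dec n k y hy2 hyk hykn j (by omega) (by omega)
        exact le_trans this (ih i hi hij' (by omega))
      · have : i = j + 1 := by omega
        rw [this]
  -- Vandermonde
  have hvdm : n.choose k = ∑ i ∈ range (k + 1), g i := by
    have hv := Nat.add_choose_eq y (n - y) k
    rw [Nat.add_sub_cancel' (by omega : y ≤ n)] at hv
    rw [hv, Finset.Nat.sum_antidiagonal_eq_sum_range_succ_mk]
  have hsplit0 : ∑ i ∈ range (k + 1), g i = g 0 + ∑ i ∈ Icc 1 k, g i := by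
    rw [← Nat.Ico_zero_eq_range, Finset.sum_eq_sum_Ico_succ_bot (by omega : 0 < k + 1),
      Finset.Ico_add_one_right_eq_Icc]
  have hsplit1 : ∑ i ∈ Icc 1 k, g i = ∑ i ∈ Icc 1 y, g i + ∑ i ∈ Icc (y + 1) k, g i := by
    have e1 : Icc 1 k = Ioc 0 k := Finset.Icc_add_one_left_eq_Ioc 0 k
    have e2 : Icc 1 y = Ioc 0 y := Finset.Icc_add_one_left_eq_Ioc 0 y
    rw [Finset.Icc_add_one_left_eq_Ioc, e1, e2]
    exact (Finset.sum_Ioc_consecutive g (by omega : 0 ≤ y) (le_of_lt hyk)).symm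
  have htail : ∑ i ∈ Icc (y + 1) k, g i = 0 := by
    apply Finset.sum_eq_zero
    intro i hi
    simp only [Finset.mem_Icc] at hi
    simp only [hg]
    rw [Nat.choose_eq_zero_of_lt (by omega : y < i)]
    ring
  have hsplit2 : ∑ i ∈ Icc 1 y, g i = ∑ i ∈ Icc 1 h, g i + ∑ i ∈ Icc (h + 1) y, g i := by
    have e1 : Icc 1 y = Ioc 0 y := Finset.Icc_add_one_left_eq_Ioc 0 y
    have e2 : Icc 1 h = Ioc 0 h := Finset.Icc_add_one_left_eq_Ioc 0 h
    rw [Finset.Icc_add_one_left_eq_Ioc, e1, e2]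
    exact (Finset.sum_Ioc_consecutive g (by omega : 0 ≤ h) (by omega : h ≤ y)).symm
  have hpair : ∑ i ∈ Icc (h + 1) y, g i ≤ ∑ i ∈ Icc 1 h, g i := by
    rw [← Finset.Ico_add_one_right_eq_Icc, ← Finset.Ico_add_one_right_eq_Icc,
      Finset.sum_Ico_eq_sum_range, Finset.sum_Ico_eq_sum_range]
    have : y + 1 - (h + 1) = h + 1 - 1 := by omega
    rw [this]
    apply Finset.sum_le_sum
    intro i hi
    simp only [Finset.mem_range] at hi
    exact hchain (h + 1 + i) (1 + i) (by omega) (by omega) (by omega)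
  -- key nat inequality
  set S : ℕ := ∑ i ∈ Icc 1 h, g i with hS
  have hg0 : g 0 = (n - y).choose k := by simp [hg]
  have hkey : n.choose k ≤ (n - y).choose k + 2 * S := by
    rw [hvdm, hsplit0, hsplit1, htail, hsplit2, hg0]
    omega
  -- descFactorial ratio bound
  have hdf : (n - y).choose k * n ^ k ≤ n.choose k * (n - y) ^ k := by
    have h0 := descFactorial_ratio n y k (by omega)
    rw [Nat.descFactorial_eq_factorial_mul_choose, Nat.descFactorial_eq_factorial_mul_choose]
      at h0
    have h0' : k.factorial * ((n - y).choose k * n ^ k)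
        ≤ k.factorial * (n.choose k * (n - y) ^ k) := by
      calc k.factorial * ((n - y).choose k * n ^ k)
          = k.factorial * (n - y).choose k * n ^ k := by ring
        _ ≤ k.factorial * n.choose k * (n - y) ^ k := h0
        _ = k.factorial * (n.choose k * (n - y) ^ k) := by ring
    exact Nat.le_of_mul_le_mul_left h0' k.factorial_pos
  -- move to ℝ
  have hC0 : 0 < (n.choose k : ℝ) := by
    exact_mod_cast Nat.choose_pos hkn
  set C : ℝ := (n.choose k : ℝ) with hCdef
  set B : ℝ := ((n - y).choose k : ℝ) with hBdef
  have hB0 : 0 ≤ B := by positivity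
  -- ratio bound in ℝ
  have hratio : B / C ≤ (((n - y : ℕ) : ℝ) / n) ^ k := by
    rw [div_pow, div_le_div_iff₀ hC0 (by positivity : (0:ℝ) < (n:ℝ) ^ k)]
    have : ((n:ℝ)) ^ k = ((n ^ k : ℕ) : ℝ) := by push_cast; ring
    calc B * (n:ℝ) ^ k = (((n - y).choose k * n ^ k : ℕ) : ℝ) := by push_cast; ring
      _ ≤ ((n.choose k * (n - y) ^ k : ℕ) : ℝ) := by exact_mod_cast hdf
      _ = ((n - y : ℕ) : ℝ) ^ k * C := by push_cast; ring
  have hyn : (y : ℝ) ≤ n := by exact_mod_cast (by omega : y ≤ n)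
  have hcast : ((n - y : ℕ) : ℝ) = (n : ℝ) - y := by
    push_cast [Nat.cast_sub (by omega : y ≤ n)]; ring
  have hbase : ((n - y : ℕ) : ℝ) / n ≤ Real.exp (-(y / n)) := by
    rw [hcast]
    have := Real.add_one_le_exp (-(y / n : ℝ))
    have hn' : (0:ℝ) < n := by positivity
    rw [sub_div]
    rw [div_self (ne_of_gt hn')]
    linarith
  have hbase0 : (0:ℝ) ≤ ((n - y : ℕ) : ℝ) / n := by positivity
  have hpow : (((n - y : ℕ) : ℝ) / n) ^ k ≤ Real.exp (-(y * k / n)) := by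
    calc (((n - y : ℕ) : ℝ) / n) ^ k ≤ (Real.exp (-(y / n))) ^ k :=
          pow_le_pow_left₀ hbase0 hbase k
      _ = Real.exp (k * (-(y / n))) := (Real.exp_nat_mul _ k).symm
      _ = Real.exp (-(y * k / n)) := by ring_nf
  have hexp : Real.exp (-(y * k / n)) ≤ (Real.sqrt 2)⁻¹ := by
    have hs2 : Real.exp (Real.log 2 / 2) = Real.sqrt 2 := by
      rw [← Real.log_sqrt (by norm_num : (0:ℝ) ≤ 2)]
      exact Real.exp_log (Real.sqrt_pos.mpr (by norm_num))
    calc Real.exp (-(y * k / n)) ≤ Real.exp (-(Real.log 2 / 2)) :=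
          Real.exp_le_exp.mpr (by linarith)
      _ = (Real.sqrt 2)⁻¹ := by rw [Real.exp_neg, hs2]
  have hBC : B * Real.sqrt 2 ≤ C := by
    have hs : (0:ℝ) < Real.sqrt 2 := Real.sqrt_pos.mpr (by norm_num)
    have hr : B / C ≤ (Real.sqrt 2)⁻¹ := le_trans hratio (le_trans hpow hexp)
    have : B ≤ (Real.sqrt 2)⁻¹ * C := (div_le_iff₀ hC0).mp hr
    calc B * Real.sqrt 2 ≤ (Real.sqrt 2)⁻¹ * C * Real.sqrt 2 := by
          exact mul_le_mul_of_nonneg_right this (le_of_lt hs)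
      _ = C := by field_simp
  -- sum of pcoup
  have hsum : ∑ i ∈ Finset.Icc 1 (y / 2), pcoup n k y i = (S : ℝ) / (2 * C) := by
    rw [hhy]
    simp only [pcoup, hCdef]
    rw [← Finset.sum_div, hS, Nat.cast_sum]
  rw [hsum]
  have hkeyR : C ≤ B + 2 * (S : ℝ) := by
    have : (n.choose k : ℝ) ≤ (((n - y).choose k + 2 * S : ℕ) : ℝ) := by exact_mod_cast hkey
    push_cast at this
    linarith
  have hs : (0:ℝ) < Real.sqrt 2 := Real.sqrt_pos.mpr (by norm_num)
  have hS0 : (0:ℝ) ≤ (S : ℝ) := by positivity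
  rw [div_le_div_iff₀ (by positivity) (by positivity)]
  have hmul2 : C * Real.sqrt 2 ≤ (B + 2 * (S:ℝ)) * Real.sqrt 2 :=
    mul_le_mul_of_nonneg_right hkeyR (le_of_lt hs)
  nlinarith [hmul2, hBC]
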